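/- Let ε ≥ 0.01, let 0 < δ ≤ 0.05, let Δ > 0, and let a be a real number satisfying erfc(a) − e^ε · erfc(√(a² + ε)) = 2δ. Then (a + √(a² + ε)) · Δ / (ε·√2) < √(2·ln(1/(2δ))) · Δ/ε + Δ/√(2ε). -/

import Mathlib

open Real

/-- The Gauss error function `erf x = (2/√π) ∫₀ˣ e^{−t²} dt`. -/
noncomputable def erf (x : ℝ) : ℝ := 2 / Real.sqrt Real.pi * ∫ t in (0:ℝ)..x, Real.exp (-t ^ 2)

/-- The complementary error function `erfc x = 1 - erf x`. -/
noncomputable def erfc (x : ℝ) : ℝ := 1 - erf x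

section aux
open MeasureTheory Set Filter


-- integrability of exp(-t^2) on Ioi x
lemma intOn (x : ℝ) : IntegrableOn (fun t : ℝ => Real.exp (-t ^ 2)) (Ioi x) := by
  have h := (integrable_exp_neg_mul_sq (b := 1) one_pos).integrableOn (s := Ioi x)
  simpa using h

lemma intOn' (x : ℝ) : IntegrableOn (fun t : ℝ => t * Real.exp (-t ^ 2)) (Ioi x) := by
  have h := (integrable_mul_exp_neg_mul_sq (b := 1) one_pos).integrableOn (s := Ioi x)
  simpa using h

-- total integral
lemma total : ∫ t in Ioi (0:ℝ), Real.exp (-t ^ 2) = Real.sqrt Real.pi / 2 := by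
  have h := integral_gaussian_Ioi 1
  simpa using h

-- erfc as tail integral for x ≥ 0
lemma erfc_eq {x : ℝ} (hx : 0 ≤ x) :
    (1 : ℝ) - 2 / Real.sqrt Real.pi * ∫ t in (0:ℝ)..x, Real.exp (-t ^ 2)
      = 2 / Real.sqrt Real.pi * ∫ t in Ioi x, Real.exp (-t ^ 2) := by
  have hsplit : (∫ t in Ioc (0:ℝ) x, Real.exp (-t ^ 2)) + ∫ t in Ioi x, Real.exp (-t ^ 2)
      = ∫ t in Ioi (0:ℝ), Real.exp (-t ^ 2) := by
    rw [← setIntegral_union (Ioc_disjoint_Ioi le_rfl) measurableSet_Ioi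
      ((intOn 0).mono_set Ioc_subset_Ioi_self) (intOn x), Ioc_union_Ioi_eq_Ioi hx]
  have hiv : (∫ t in (0:ℝ)..x, Real.exp (-t ^ 2)) = ∫ t in Ioc (0:ℝ) x, Real.exp (-t ^ 2) :=
    intervalIntegral.integral_of_le hx
  have hπ : Real.sqrt Real.pi > 0 := Real.sqrt_pos.2 Real.pi_pos
  rw [hiv]
  have := total
  field_simp
  nlinarith [hsplit, this]

lemma tail_pos (x : ℝ) : 0 < ∫ t in Ioi x, Real.exp (-t ^ 2) := by
  refine (setIntegral_pos_iff_support_of_nonneg_ae ?_ (intOn x)).2 ?_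
  · filter_upwards with t using (Real.exp_pos _).le
  · have : Function.support (fun t : ℝ => Real.exp (-t ^ 2)) = Set.univ := by
      ext t; simp [Function.mem_support, (Real.exp_pos _).ne']
    rw [this, Set.univ_inter]
    simp [Real.volume_Ioi]

lemma tail_mul : ∀ x : ℝ, ∫ t in Ioi x, t * Real.exp (-t ^ 2) = Real.exp (-x ^ 2) / 2 := by
  intro x
  have A : ∀ t ∈ Ici x, HasDerivAt (fun u : ℝ => -Real.exp (-u ^ 2) / 2)
      (t * Real.exp (-t ^ 2)) t := by
    intro t _
    have h1 : HasDerivAt (fun u : ℝ => -u ^ 2) (-(2 * t)) t := by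
      simpa using ((hasDerivAt_pow 2 t).fun_neg)
    have h2 := (h1.exp.fun_neg.div_const 2)
    exact h2.congr_deriv (by ring)
  have B : Tendsto (fun t : ℝ => -Real.exp (-t ^ 2) / 2) atTop (nhds 0) := by
    have h1 : Tendsto (fun t : ℝ => -t ^ 2) atTop atBot := by
      have h : Tendsto (fun t : ℝ => t ^ 2) atTop atTop := tendsto_pow_atTop two_ne_zero
      exact tendsto_neg_atBot_iff.2 h
    have := (Real.tendsto_exp_atBot.comp h1).neg.div_const 2
    simpa using this
  have := integral_Ioi_of_hasDerivAt_of_tendsto' (f := fun u : ℝ => -Real.exp (-u ^ 2) / 2)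
    (fun t ht => A t ht) (intOn' x) B
  rw [this]; ring

lemma tail_le {x : ℝ} (hx : 0 < x) :
    (∫ t in Ioi x, Real.exp (-t ^ 2)) ≤ Real.exp (-x ^ 2) / (2 * x) := by
  have h1 : (∫ t in Ioi x, Real.exp (-t ^ 2)) ≤ ∫ t in Ioi x, (t / x) * Real.exp (-t ^ 2) := by
    refine setIntegral_mono_on (intOn x) ?_ measurableSet_Ioi ?_
    · have h := (intOn' x).div_const x
      have heq : (fun t : ℝ => t / x * Real.exp (-t ^ 2)) = fun t : ℝ => t * Real.exp (-t ^ 2) / x := by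
        ext t; ring
      rw [heq]; exact h
    · intro t ht
      have htx : x < t := ht
      have : (1:ℝ) ≤ t / x := (one_le_div hx).2 htx.le
      nlinarith [Real.exp_pos (-t ^ 2)]
  have h2 : (∫ t in Ioi x, (t / x) * Real.exp (-t ^ 2))
      = (∫ t in Ioi x, t * Real.exp (-t ^ 2)) / x := by
    rw [← integral_div]
    congr 1; ext t; ring
  rw [h2, tail_mul x] at h1
  calc (∫ t in Ioi x, Real.exp (-t ^ 2)) ≤ Real.exp (-x ^ 2) / 2 / x := h1
    _ = Real.exp (-x ^ 2) / (2 * x) := by ring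


lemma erfc_tail {x : ℝ} (hx : 0 ≤ x) :
    erfc x = 2 / Real.sqrt Real.pi * ∫ t in Ioi x, Real.exp (-t ^ 2) := by
  rw [erfc, erf]; exact erfc_eq hx

lemma erfc_pos {x : ℝ} (hx : 0 ≤ x) : 0 < erfc x := by
  rw [erfc_tail hx]
  have := tail_pos x
  have hπ : (0:ℝ) < Real.sqrt Real.pi := Real.sqrt_pos.2 Real.pi_pos
  positivity

lemma erfc_le_exp {x : ℝ} (hx : 1 ≤ x) : erfc x ≤ Real.exp (-x ^ 2) := by
  have hx0 : 0 < x := lt_of_lt_of_le one_pos hx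
  rw [erfc_tail hx0.le]
  have h1 := tail_le hx0
  have hπ : (1:ℝ) ≤ Real.sqrt Real.pi := by
    rw [show (1:ℝ) = Real.sqrt 1 by simp]
    exact Real.sqrt_le_sqrt (by nlinarith [Real.pi_gt_three])
  have hπ0 : (0:ℝ) < Real.sqrt Real.pi := lt_of_lt_of_le one_pos hπ
  calc 2 / Real.sqrt Real.pi * ∫ t in Ioi x, Real.exp (-t ^ 2)
      ≤ 2 / Real.sqrt Real.pi * (Real.exp (-x ^ 2) / (2 * x)) := by
        have : (0:ℝ) < 2 / Real.sqrt Real.pi := by positivity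
        exact mul_le_mul_of_nonneg_left h1 this.le
    _ = Real.exp (-x ^ 2) / (Real.sqrt Real.pi * x) := by
        field_simp
    _ ≤ Real.exp (-x ^ 2) := by
        rw [div_le_iff₀ (by positivity)]
        nlinarith [Real.exp_pos (-x ^ 2),
          mul_le_mul hπ hx zero_le_one (le_trans zero_le_one hπ)]

end aux

lemma sqrt_add_le (a ε : ℝ) (hε : 0 ≤ ε) :
    Real.sqrt (a ^ 2 + ε) ≤ |a| + Real.sqrt ε := by
  have h1 : a ^ 2 + ε ≤ (|a| + Real.sqrt ε) ^ 2 := by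
    have h2 := Real.sq_sqrt hε
    have h3 := sq_abs a
    nlinarith [abs_nonneg a, Real.sqrt_nonneg ε]
  calc Real.sqrt (a ^ 2 + ε) ≤ Real.sqrt ((|a| + Real.sqrt ε) ^ 2) := Real.sqrt_le_sqrt h1
    _ = |a| + Real.sqrt ε := Real.sqrt_sq (by positivity)

/-- If `ε ≥ 0.01`, `0 < δ ≤ 0.05`, `Δ > 0`, and `a` satisfies
`erfc a − e^ε · erfc (√(a² + ε)) = 2δ`, then
`(a + √(a² + ε)) · Δ / (ε·√2) < √(2·ln(1/(2δ))) · Δ/ε + Δ/√(2ε)`. -/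
theorem sigma_DP_OPT_lt (ε δ Δ a : ℝ)
    (hε : 0.01 ≤ ε) (hδ0 : 0 < δ) (hδ1 : δ ≤ 0.05) (hΔ : 0 < Δ)
    (ha : erfc a - Real.exp ε * erfc (Real.sqrt (a ^ 2 + ε)) = 2 * δ) :
    (a + Real.sqrt (a ^ 2 + ε)) * Δ / (ε * Real.sqrt 2) <
      Real.sqrt (2 * Real.log (1 / (2 * δ))) * Δ / ε + Δ / Real.sqrt (2 * ε) := by
  set L := Real.log (1 / (2 * δ)) with hLdef
  have hε0 : (0:ℝ) < ε := lt_of_lt_of_le (by norm_num) hε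
  -- L ≥ 1
  have h10 : (10:ℝ) ≤ 1 / (2 * δ) := by
    rw [le_div_iff₀ (by positivity)]; linarith
  have hL1 : (1:ℝ) ≤ L := by
    have he : Real.exp 1 ≤ 10 := le_of_lt (lt_of_lt_of_le Real.exp_one_lt_d9 (by norm_num))
    have : (1:ℝ) ≤ Real.log 10 := (Real.le_log_iff_exp_le (by norm_num)).2 he
    calc (1:ℝ) ≤ Real.log 10 := this
      _ ≤ L := Real.log_le_log (by norm_num) h10
  have hsL1 : (1:ℝ) ≤ Real.sqrt L := by
    rw [show (1:ℝ) = Real.sqrt 1 by simp]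
    exact Real.sqrt_le_sqrt hL1
  -- key inequality
  have key : a + Real.sqrt (a ^ 2 + ε) < 2 * Real.sqrt L + Real.sqrt ε := by
    have hbound := sqrt_add_le a ε hε0.le
    rcases le_or_gt a 0 with h0 | h0
    · have habs : |a| = -a := abs_of_nonpos h0
      rw [habs] at hbound
      nlinarith
    · have habs : |a| = a := abs_of_pos h0
      rw [habs] at hbound
      have haL : a < Real.sqrt L := by
        rcases lt_or_ge a 1 with h1 | h1
        · exact lt_of_lt_of_le h1 hsL1
        · -- 2δ < erfc a
          have hs0 : (0:ℝ) ≤ Real.sqrt (a ^ 2 + ε) := Real.sqrt_nonneg _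
          have herfc2 : 0 < erfc (Real.sqrt (a ^ 2 + ε)) := erfc_pos hs0
          have h2δ : 2 * δ < erfc a := by
            nlinarith [Real.exp_pos ε, mul_pos (Real.exp_pos ε) herfc2]
          have hexp : 2 * δ < Real.exp (-a ^ 2) :=
            lt_of_lt_of_le h2δ (erfc_le_exp h1)
          have hlog : Real.log (2 * δ) < -a ^ 2 :=
            (Real.log_lt_iff_lt_exp (by positivity)).2 hexp
          have hL' : a ^ 2 < L := by
            rw [hLdef, one_div, Real.log_inv]
            linarith
          calc a = Real.sqrt (a ^ 2) := (Real.sqrt_sq h0.le).symm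
            _ < Real.sqrt L := Real.sqrt_lt_sqrt (by positivity) hL'
      nlinarith
  -- algebra to conclude
  have hs2 : (0:ℝ) < Real.sqrt 2 := by positivity
  have hsε : (0:ℝ) < Real.sqrt ε := Real.sqrt_pos.2 hε0
  have hL0 : (0:ℝ) ≤ L := by linarith
  have e1 : Real.sqrt (2 * L) = Real.sqrt 2 * Real.sqrt L := Real.sqrt_mul (by norm_num) L
  have e2 : Real.sqrt (2 * ε) = Real.sqrt 2 * Real.sqrt ε := Real.sqrt_mul (by norm_num) ε
  have h2 : Real.sqrt 2 * Real.sqrt 2 = 2 := Real.mul_self_sqrt (by norm_num)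
  have hεe : Real.sqrt ε * Real.sqrt ε = ε := Real.mul_self_sqrt hε0.le
  have eR : Real.sqrt (2 * L) * Δ / ε + Δ / Real.sqrt (2 * ε)
      = (2 * Real.sqrt L + Real.sqrt ε) * Δ / (ε * Real.sqrt 2) := by
    rw [e1, e2]
    field_simp
    linear_combination (Real.sqrt L * Real.sqrt ε) * h2 - hεe
  rw [eR]
  have hpos : (0:ℝ) < ε * Real.sqrt 2 := by positivity
  gcongr
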